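/- Fix γ > 0 and r > 0. Define g(σ) = min{γ, r/√(2πσ²)} − γ·erf(r/(2^{3/2} γ σ)) for σ > 0. Then the supremum of g over σ > 0 is attained at σ* = r/(γ√(2π)), and g(σ*) = γ·(1 − erf(√π/2)). -/

import Mathlib

/-- The Gauss error function. -/
noncomputable def erf (t : ℝ) : ℝ :=
  (2 / Real.sqrt Real.pi) * ∫ s in (0:ℝ)..t, Real.exp (-s ^ 2)

lemma exp_int (a b : ℝ) : IntervalIntegrable (fun s => Real.exp (-s ^ 2)) MeasureTheory.volume a b :=
  (Real.continuous_exp.comp (by continuity)).intervalIntegrable a b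

lemma erf_sub (a b : ℝ) :
    erf b - erf a = (2 / Real.sqrt Real.pi) * ∫ s in a..b, Real.exp (-s ^ 2) := by
  unfold erf
  rw [← mul_sub, intervalIntegral.integral_interval_sub_left (exp_int 0 b) (exp_int 0 a)]

lemma erf_mono {a b : ℝ} (h : a ≤ b) : erf a ≤ erf b := by
  have h1 : (0:ℝ) ≤ ∫ s in a..b, Real.exp (-s ^ 2) :=
    intervalIntegral.integral_nonneg h (fun x _ => (Real.exp_pos _).le)
  have h2 : (0:ℝ) ≤ 2 / Real.sqrt Real.pi :=
    div_nonneg (by norm_num) (Real.sqrt_nonneg _)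
  nlinarith [erf_sub a b]

lemma erf_sub_le {a b : ℝ} (h : a ≤ b) :
    erf b - erf a ≤ (2 / Real.sqrt Real.pi) * (b - a) := by
  rw [erf_sub]
  have h2 : (0:ℝ) ≤ 2 / Real.sqrt Real.pi :=
    div_nonneg (by norm_num) (Real.sqrt_nonneg _)
  have hint : (∫ s in a..b, Real.exp (-s ^ 2)) ≤ ∫ s in a..b, (1:ℝ) := by
    apply intervalIntegral.integral_mono_on h (exp_int a b) (intervalIntegrable_const)
    intro x _
    exact Real.exp_le_one_iff.2 (by nlinarith [sq_nonneg x])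
  have : (∫ s in a..b, (1:ℝ)) = b - a := by simp
  nlinarith

theorem optimal_sigma_gap (γ r : ℝ) (hγ : 0 < γ) (hr : 0 < r)
    (g : ℝ → ℝ)
    (hg : ∀ σ, g σ = min γ (r / Real.sqrt (2 * Real.pi * σ ^ 2)) -
      γ * erf (r / (2 ^ ((3 : ℝ) / 2) * γ * σ))) :
    (∀ σ : ℝ, 0 < σ → g σ ≤ g (r / (γ * Real.sqrt (2 * Real.pi)))) ∧
      g (r / (γ * Real.sqrt (2 * Real.pi))) = γ * (1 - erf (Real.sqrt Real.pi / 2)) := by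
  have hπ : 0 < Real.pi := Real.pi_pos
  have hsπ : 0 < Real.sqrt Real.pi := Real.sqrt_pos.2 hπ
  have hs2π : 0 < Real.sqrt (2 * Real.pi) := Real.sqrt_pos.2 (by positivity)
  have hs2 : 0 < Real.sqrt 2 := Real.sqrt_pos.2 (by norm_num)
  have h2pi : Real.sqrt (2 * Real.pi) = Real.sqrt 2 * Real.sqrt Real.pi :=
    Real.sqrt_mul (by norm_num) _
  have hpow : (2:ℝ) ^ ((3:ℝ)/2) = 2 * Real.sqrt 2 := by
    rw [show (3:ℝ)/2 = 1 + 1/2 by norm_num, Real.rpow_add two_pos, Real.rpow_one,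
      ← Real.sqrt_eq_rpow]
  set σs : ℝ := r / (γ * Real.sqrt (2 * Real.pi)) with hσs
  have hσspos : 0 < σs := by positivity
  -- general simplification for positive σ
  have hsqrt : ∀ σ : ℝ, 0 < σ → Real.sqrt (2 * Real.pi * σ ^ 2) = Real.sqrt (2 * Real.pi) * σ := by
    intro σ hσ
    rw [Real.sqrt_mul (by positivity), Real.sqrt_sq hσ.le]
  -- value at σs
  have hargs : r / (2 ^ ((3:ℝ)/2) * γ * σs) = Real.sqrt Real.pi / 2 := by
    rw [hpow, hσs, h2pi]
    field_simp
  have hmins : r / Real.sqrt (2 * Real.pi * σs ^ 2) = γ := by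
    rw [hsqrt σs hσspos, hσs]
    field_simp
  have hval : g σs = γ * (1 - erf (Real.sqrt Real.pi / 2)) := by
    rw [hg, hargs, hmins, min_self]
    ring
  refine ⟨?_, hval⟩
  intro σ hσ
  rw [hval, hg, hsqrt σ hσ, hpow]
  set u : ℝ := r / (Real.sqrt (2 * Real.pi) * σ) with hu
  have hupos : 0 < u := by positivity
  have harg : r / (2 * Real.sqrt 2 * γ * σ) = Real.sqrt Real.pi * u / (2 * γ) := by
    rw [hu, h2pi]
    field_simp
  rw [harg]
  rcases le_total u γ with hcase | hcase
  · -- min = u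
    rw [min_eq_right hcase]
    have hle : Real.sqrt Real.pi * u / (2 * γ) ≤ Real.sqrt Real.pi / 2 := by
      rw [div_le_div_iff₀ (by positivity) (by norm_num)]
      nlinarith
    have := erf_sub_le hle
    have hcalc : (2 / Real.sqrt Real.pi) *
        (Real.sqrt Real.pi / 2 - Real.sqrt Real.pi * u / (2 * γ)) = (γ - u) / γ := by
      field_simp
    rw [hcalc] at this
    have : γ * (erf (Real.sqrt Real.pi / 2) - erf (Real.sqrt Real.pi * u / (2 * γ))) ≤ γ - u := by
      calc γ * (erf (Real.sqrt Real.pi / 2) - erf (Real.sqrt Real.pi * u / (2 * γ)))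
          ≤ γ * ((γ - u) / γ) := by nlinarith
        _ = γ - u := by field_simp
    linarith
  · -- min = γ
    rw [min_eq_left hcase]
    have hle : Real.sqrt Real.pi / 2 ≤ Real.sqrt Real.pi * u / (2 * γ) := by
      rw [div_le_div_iff₀ (by norm_num) (by positivity)]
      nlinarith
    have := erf_mono hle
    nlinarith
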